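/- Let w ∈ A_q for some q ∈ (1, ∞). For every 1 < p < ∞ and every finite collection 𝒫 of bitiles, the quantity sup over 2-overlapping trees T ⊂ 𝒫 of w(I_T)^{-1/p} ‖S_T f‖_{L^p(w)} is comparable, with constants depending only on p and w, to the quantity sup over 2-overlapping trees T ⊂ 𝒫 of w(I_T)^{-1} ‖S_T f‖_{L^{1,∞}(w)}. -/

import Mathlib

open MeasureTheory Real Set
open scoped ENNReal NNReal

noncomputable section

/-- The weighted measure `w(x) dx` on `ℝ`. -/
def wMeasure (w : ℝ → ℝ) : Measure ℝ :=
  volume.withDensity fun x => ENNReal.ofReal (w x)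

/-- The weighted measure of a set, `w(E) = ∫_E w`. -/
def wSet (w : ℝ → ℝ) (E : Set ℝ) : ℝ≥0∞ := wMeasure w E

/-- Weighted `L^p` (quasi-)norm of a function on a set `A` (with `p` a real exponent). -/
def wLpOn {E : Type*} [NormedAddCommGroup E] (w : ℝ → ℝ) (p : ℝ) (A : Set ℝ) (f : ℝ → E) :
    ℝ≥0∞ :=
  (∫⁻ x in A, (‖f x‖₊ : ℝ≥0∞) ^ p ∂(wMeasure w)) ^ (1 / p)

/-- Weighted `L^p` (quasi-)norm on all of `ℝ`. -/
def wLp {E : Type*} [NormedAddCommGroup E] (w : ℝ → ℝ) (p : ℝ) (f : ℝ → E) : ℝ≥0∞ :=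
  (∫⁻ x, (‖f x‖₊ : ℝ≥0∞) ^ p ∂(wMeasure w)) ^ (1 / p)

/-- A weight: a measurable, a.e. positive, locally integrable function. -/
structure IsWeight (w : ℝ → ℝ) : Prop where
  meas : Measurable w
  pos : ∀ᵐ x : ℝ, 0 < w x
  locInt : LocallyIntegrable w

/-- The Muckenhoupt `A_p` condition with constant `A` (with the usual interpretation
for `p = 1`). -/
def apBound (p : ℝ) (w : ℝ → ℝ) (A : ℝ) : Prop :=
  if p = 1 then
    ∀ a b : ℝ, a < b → ∀ᵐ x : ℝ, x ∈ Set.Ioo a b →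
      (b - a)⁻¹ * ∫ y in a..b, w y ≤ A * w x
  else
    ∀ a b : ℝ, a < b →
      ((b - a)⁻¹ * ∫ y in a..b, w y) *
        ((b - a)⁻¹ * ∫ y in a..b, w y ^ (-1 / (p - 1))) ^ (p - 1) ≤ A

/-- `w` is a Muckenhoupt `A_p` weight. -/
def IsAp (p : ℝ) (w : ℝ → ℝ) : Prop :=
  IsWeight w ∧ ∃ A : ℝ, 0 < A ∧ apBound p w A

/-- The `k`-th Fourier coefficient of a function on `[0,1]`. -/
def fourierCoeff01 (f : ℝ → ℂ) (k : ℤ) : ℂ :=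
  ∫ x in (0:ℝ)..1, f x * Complex.exp (-2 * (Real.pi : ℂ) * Complex.I * (k : ℂ) * (x : ℂ))

/-- The partial Fourier sum `S_n f(x) = ∑_{|k| < n} f̂(k) e^{2πikx}` (zero for `n ≤ 0`). -/
def partialFourierSum01 (f : ℝ → ℂ) (n : ℤ) (x : ℝ) : ℂ :=
  ∑ k ∈ Finset.Ioo (-n) n,
    fourierCoeff01 f k * Complex.exp (2 * (Real.pi : ℂ) * Complex.I * (k : ℂ) * (x : ℂ))

/-- The `r`-variational Carleson operator for Fourier series on `[0,1]`. -/
def varCarleson01 (r : ℝ) (f : ℝ → ℂ) (x : ℝ) : ℝ≥0∞ :=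
  ⨆ (M : ℕ) (N : ℕ → ℤ) (_ : StrictMono N),
    ENNReal.ofReal ((∑ j ∈ Finset.range M,
      ‖partialFourierSum01 f (N (j + 1)) x - partialFourierSum01 f (N j) x‖ ^ r) ^ (1 / r))

/-- The maximal partial Fourier sum operator (`r = ∞` variation). -/
def maxCarleson01 (f : ℝ → ℂ) (x : ℝ) : ℝ≥0∞ :=
  ⨆ n : ℤ, (‖partialFourierSum01 f n x‖₊ : ℝ≥0∞)

/-- The `r`-variational Carleson operator on the real line. -/
def varCarlesonR (r : ℝ) (f : ℝ → ℂ) (x : ℝ) : ℝ≥0∞ :=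
  ⨆ (K : ℕ) (N : ℕ → ℝ) (_ : StrictMono N),
    ENNReal.ofReal ((∑ j ∈ Finset.range K,
      ‖∫ ξ in (N j)..(N (j + 1)),
        FourierTransform.fourier f ξ * Complex.exp (2 * (Real.pi : ℂ) * Complex.I * (ξ : ℂ) * (x : ℂ))‖ ^ r) ^ (1 / r))
open Classical

/-! ### Tiles, bitiles, trees and the phase-plane machinery -/

/-- An interval, given by its endpoints. -/
structure Ivl where
  lo : ℝ
  hi : ℝ

namespace Ivl

/-- The length of an interval. -/
def len (I : Ivl) : ℝ := I.hi - I.lo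

/-- The center of an interval. -/
def mid (I : Ivl) : ℝ := (I.lo + I.hi) / 2

/-- The underlying set of an interval. -/
def toSet (I : Ivl) : Set ℝ := Set.Ico I.lo I.hi

/-- `cI`: the interval with the same center as `I` and length `c * |I|`. -/
def dilate (c : ℝ) (I : Ivl) : Ivl :=
  ⟨I.mid - c * I.len / 2, I.mid + c * I.len / 2⟩

/-- An interval is dyadic if it is of the form `[n 2^k, (n+1) 2^k)`. -/
def dyadic (I : Ivl) : Prop :=
  ∃ k n : ℤ, I.lo = (n : ℝ) * 2 ^ k ∧ I.hi = ((n : ℝ) + 1) * 2 ^ k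

end Ivl

/-- The window function `χ̃_I(x) = (1 + ((x - c(I))/|I|)²)^{-1/2}`. -/
def chiT (I : Ivl) (x : ℝ) : ℝ :=
  (1 + ((x - I.mid) / I.len) ^ 2) ^ (-(1/2) : ℝ)

/-- A tile: a dyadic rectangle `I × ω` of area `1`. -/
structure Tile where
  I : Ivl
  ω : Ivl
  dyI : I.dyadic
  dyω : ω.dyadic
  area : I.len * ω.len = 1

/-- The admissibility conditions on the fixed constants. -/
def Admissible (C1 C2 C21 C22 C3 : ℝ) : Prop :=
  1 ≤ C2 ∧ 0 < C3 ∧ C3 < C2 ∧ C2 ≤ C1 ∧ C2 ≤ C21 ∧ C2 ≤ C22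

/-- A bitile: two tiles `P₁, P₂` over a common spatial dyadic interval, with
`sup C₂ω_{P₁} ≤ inf C₂ω_{P₂}`, frequency interval `ω_P` equal to the convex hull of
`C_{2,1}ω_{P₁} ∪ C_{2,2}ω_{P₂}`, of length at most `C₁(|ω_{P₁}| + |ω_{P₂}|)`. -/
structure Bitile (C1 C2 C21 C22 : ℝ) where
  t1 : Tile
  t2 : Tile
  sameI : t1.I = t2.I
  sep : (Ivl.dilate C2 t1.ω).hi ≤ (Ivl.dilate C2 t2.ω).lo
  lenBound : (Ivl.dilate C22 t2.ω).hi - (Ivl.dilate C21 t1.ω).lo ≤ C1 * (t1.ω.len + t2.ω.len)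

namespace Bitile

variable {C1 C2 C21 C22 : ℝ}

/-- The spatial interval `I_P` of a bitile. -/
def I (P : Bitile C1 C2 C21 C22) : Ivl := P.t1.I

/-- The frequency interval `ω_P` (the convex hull of `C_{2,1}ω_{P₁} ∪ C_{2,2}ω_{P₂}`). -/
def ω (P : Bitile C1 C2 C21 C22) : Ivl :=
  ⟨(Ivl.dilate C21 P.t1.ω).lo, (Ivl.dilate C22 P.t2.ω).hi⟩

/-- The interval `ω̃_P`, the convex hull of `C₂ω_{P₁} ∪ C₂ω_{P₂}`. -/
def ωt (P : Bitile C1 C2 C21 C22) : Ivl :=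
  ⟨(Ivl.dilate C2 P.t1.ω).lo, (Ivl.dilate C2 P.t2.ω).hi⟩

/-- The phase-plane region `I_P × ω_P` of a bitile. -/
def carrier (P : Bitile C1 C2 C21 C22) : Set (ℝ × ℝ) :=
  P.I.toSet ×ˢ P.ω.toSet

end Bitile

/-- The separation conditions (S1)–(S3) for a finite bitile collection, with
separation constant `K0`. -/
def SepConds {C1 C2 C21 C22 : ℝ} (K0 : ℝ) (Ps : Finset (Bitile C1 C2 C21 C22)) : Prop :=
  (∃ ρ : ℝ, ∀ P ∈ Ps, (P.t2.ω.lo - P.t1.ω.hi) / P.t1.ω.len = ρ) ∧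
  (∀ P ∈ Ps, ∀ P' ∈ Ps, (P.ω.toSet ∩ P'.ω.toSet).Nonempty → P.I.len = P'.I.len →
    P.ω = P'.ω) ∧
  (∀ P ∈ Ps, ∀ P' ∈ Ps, P'.I.len < P.I.len → P.ω.len < P'.t1.ω.len / K0)

/-- A Fourier wave packet adapted to a tile `t`, with decay constants `Cp N n`. -/
def IsWavePacket (C3 : ℝ) (Cp : ℕ → ℕ → ℝ) (t : Tile) (φ : ℝ → ℂ) : Prop :=
  ContDiff ℝ (⊤ : ℕ∞) φ ∧
  (∀ ξ : ℝ, FourierTransform.fourier φ ξ ≠ 0 → ξ ∈ (Ivl.dilate C3 t.ω).toSet) ∧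
  ∀ (N n : ℕ) (x : ℝ),
    ‖iteratedDeriv n φ x‖ ≤
      Cp N n * t.I.len ^ (-(1/2 : ℝ) - n) * (1 + |x - t.I.mid| / t.I.len) ^ (-((N : ℝ) + n))

/-- The (complex) inner product `⟨f, g⟩ = ∫ f ḡ`. -/
def inn (f g : ℝ → ℂ) : ℂ := ∫ x, f x * (starRingEnd ℂ) (g x)

/-- The square function `S_Q f` of a bitile collection `Q`. -/
def SQfn {C1 C2 C21 C22 : ℝ} (φ : Bitile C1 C2 C21 C22 → ℝ → ℂ) (f : ℝ → ℂ)
    (Q : Finset (Bitile C1 C2 C21 C22)) (x : ℝ) : ℝ :=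
  (∑ P ∈ Q, ‖inn f (φ P)‖ ^ 2 / P.I.len * P.I.toSet.indicator (fun _ => (1:ℝ)) x) ^ ((1:ℝ)/2)

/-- A tree of bitiles, with top (dyadic) interval `top` and top frequency `ξ`. -/
structure PTree (C1 C2 C21 C22 : ℝ) where
  bitiles : Finset (Bitile C1 C2 C21 C22)
  top : Ivl
  ξ : ℝ
  dytop : top.dyadic
  compat : ∀ P ∈ bitiles, P.I.toSet ⊆ top.toSet ∧
    Set.Ico (ξ - 1 / (2 * top.len)) (ξ + 1 / (2 * top.len)) ⊆ P.ωt.toSet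

namespace PTree

variable {C1 C2 C21 C22 : ℝ}

/-- The top frequency interval `ω_T` of a tree. -/
def ωSet (T : PTree C1 C2 C21 C22) : Set ℝ :=
  Set.Ico (T.ξ - 1 / (2 * T.top.len)) (T.ξ + 1 / (2 * T.top.len))

/-- A tree is 2-overlapping if `ξ_T ∈ C₂ω_{P₂}` for every `P` in the tree. -/
def overlapping (T : PTree C1 C2 C21 C22) : Prop :=
  ∀ P ∈ T.bitiles, T.ξ ∈ (Ivl.dilate C2 P.t2.ω).toSet

/-- A tree is 2-lacunary if `ξ_T ∉ C₂ω_{P₂}` for every `P` in the tree. -/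
def lacunary (T : PTree C1 C2 C21 C22) : Prop :=
  ∀ P ∈ T.bitiles, T.ξ ∉ (Ivl.dilate C2 P.t2.ω).toSet

end PTree

/-- The union of the bitiles of a finite collection of trees. -/
def treesUnion {C1 C2 C21 C22 : ℝ} (Ts : Finset (PTree C1 C2 C21 C22)) :
    Finset (Bitile C1 C2 C21 C22) :=
  Ts.biUnion PTree.bitiles

/-- The bitiles of `Ps` not belonging to any tree of `Ts`. -/
def residualBitiles {C1 C2 C21 C22 : ℝ} (Ps : Finset (Bitile C1 C2 C21 C22))
    (Ts : Finset (PTree C1 C2 C21 C22)) : Finset (Bitile C1 C2 C21 C22) :=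
  Ps \ treesUnion Ts

/-- The (weighted) size of a bitile collection, relative to `f`. -/
def size {C1 C2 C21 C22 : ℝ} (w : ℝ → ℝ) (φ : Bitile C1 C2 C21 C22 → ℝ → ℂ)
    (f : ℝ → ℂ) (Ps : Finset (Bitile C1 C2 C21 C22)) : ℝ≥0∞ :=
  ⨆ (T : PTree C1 C2 C21 C22) (_ : T.bitiles ⊆ Ps) (_ : T.overlapping),
    (wSet w T.top.toSet) ^ (-(1/2) : ℝ) *
      (∫⁻ x, ENNReal.ofReal (SQfn φ f T.bitiles x) ^ (2:ℝ) ∂(wMeasure w)) ^ ((1:ℝ)/2)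

/-- The `L^p` variant of the size. -/
def sizeLp {C1 C2 C21 C22 : ℝ} (w : ℝ → ℝ) (φ : Bitile C1 C2 C21 C22 → ℝ → ℂ)
    (f : ℝ → ℂ) (p : ℝ) (Ps : Finset (Bitile C1 C2 C21 C22)) : ℝ≥0∞ :=
  ⨆ (T : PTree C1 C2 C21 C22) (_ : T.bitiles ⊆ Ps) (_ : T.overlapping),
    (wSet w T.top.toSet) ^ (-(1/p) : ℝ) *
      (∫⁻ x, ENNReal.ofReal (SQfn φ f T.bitiles x) ^ p ∂(wMeasure w)) ^ (1/p)

/-- The weak `L^{1,∞}` variant of the size. -/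
def sizeWk {C1 C2 C21 C22 : ℝ} (w : ℝ → ℝ) (φ : Bitile C1 C2 C21 C22 → ℝ → ℂ)
    (f : ℝ → ℂ) (Ps : Finset (Bitile C1 C2 C21 C22)) : ℝ≥0∞ :=
  ⨆ (T : PTree C1 C2 C21 C22) (_ : T.bitiles ⊆ Ps) (_ : T.overlapping),
    (wSet w T.top.toSet)⁻¹ *
      ⨆ t : ℝ≥0, (t : ℝ≥0∞) * wMeasure w {x | (t : ℝ) < SQfn φ f T.bitiles x}

/-- A well-separated collection of 2-overlapping trees. -/
def WellSeparated {C1 C2 C21 C22 : ℝ} (C3 : ℝ) (Ts : Finset (PTree C1 C2 C21 C22)) : Prop :=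
  (∀ T ∈ Ts, T.overlapping) ∧
  (∀ T ∈ Ts, ∀ T' ∈ Ts, T ≠ T' → ∀ P ∈ T.bitiles, ∀ P' ∈ T'.bitiles,
    P'.I.len < P.I.len →
      ((Ivl.dilate C3 P.t1.ω).toSet ∩ (Ivl.dilate C3 P'.t1.ω).toSet = ∅ ∨
        P'.I.toSet ∩ T.top.toSet = ∅)) ∧
  (∀ T ∈ Ts, ∀ T' ∈ Ts, ∀ P ∈ T.bitiles, ∀ P' ∈ T'.bitiles, P ≠ P' → P.I.len = P'.I.len →
    (P.I.toSet ×ˢ (Ivl.dilate C3 P.t1.ω).toSet) ∩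
      (P'.I.toSet ×ˢ (Ivl.dilate C3 P'.t1.ω).toSet) = ∅)

/-- The counting function `Σ_{T ∈ Ts} 1_{2^k I_T}`. -/
def treeCount {C1 C2 C21 C22 : ℝ} (Ts : Finset (PTree C1 C2 C21 C22)) (k : ℕ) (x : ℝ) : ℝ :=
  ∑ T ∈ Ts, (Ivl.dilate (2 ^ k) T.top).toSet.indicator (fun _ => (1:ℝ)) x

/-- The linearizing measurable data: functions `N_j`, `d_j` with
`N_0(x) < N_1(x) < ⋯`, finitely many `d_j(x)` nonzero, and `Σ_j |d_j(x)|^{r'} = 1`. -/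
structure VarData (r' : ℝ) where
  N : ℕ → ℝ → ℝ
  d : ℕ → ℝ → ℂ
  measN : ∀ j, Measurable (N j)
  measd : ∀ j, Measurable (d j)
  monoN : ∀ x : ℝ, StrictMono fun j => N j x
  d0 : ∀ x : ℝ, d 0 x = 0
  finSupp : ∀ x : ℝ, {j : ℕ | d j x ≠ 0}.Finite
  normOne : ∀ x : ℝ, ∑' j : ℕ, ‖d j x‖ ^ r' = 1

/-- The linearizing coefficient `d_P(x)`: equals `d_j(x)` for the (unique) `j ≥ 1`
with `N_{j-1}(x) ∉ ω_P` and `N_j(x) ∈ ω_{P₂}`, and `0` if there is no such `j`. -/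
def VarData.dP {r' : ℝ} {C1 C2 C21 C22 : ℝ} (𝒟 : VarData r')
    (P : Bitile C1 C2 C21 C22) (x : ℝ) : ℂ :=
  if h : ∃ j : ℕ, 0 < j ∧ 𝒟.N (j - 1) x ∉ P.ω.toSet ∧ 𝒟.N j x ∈ P.t2.ω.toSet
  then 𝒟.d h.choose x else 0

/-- The (weighted) density of a bitile collection. -/
def density {C1 C2 C21 C22 : ℝ} (w : ℝ → ℝ) (r' D : ℝ) (g : ℝ → ℂ) (𝒟 : VarData r')
    (Ps : Finset (Bitile C1 C2 C21 C22)) : ℝ≥0∞ :=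
  ⨆ (T : PTree C1 C2 C21 C22) (_ : T.bitiles ⊆ Ps) (_ : T.bitiles.Nonempty),
    ((wSet w T.top.toSet)⁻¹ *
      ∫⁻ x, ENNReal.ofReal (chiT T.top x ^ D * ‖g x‖ ^ r' *
        (∑' j : ℕ, if 𝒟.N j x ∈ T.ωSet then ‖𝒟.d j x‖ ^ r' else 0) * w x)) ^ (1/r')

/-- The improved (weighted) density of a bitile collection. -/
def idensity {C1 C2 C21 C22 : ℝ} (w : ℝ → ℝ) (r' D : ℝ) (g : ℝ → ℂ) (𝒟 : VarData r')
    (Ps : Finset (Bitile C1 C2 C21 C22)) : ℝ≥0∞ :=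
  ⨆ (P : Bitile C1 C2 C21 C22) (_ : P ∈ Ps),
    ((wSet w P.I.toSet)⁻¹ *
      ∫⁻ x, ENNReal.ofReal (chiT P.I x ^ D * ‖g x‖ ^ r' *
        (∑' j : ℕ, if 𝒟.N j x ∈ P.t2.ω.toSet then ‖𝒟.d j x‖ ^ r' else 0) * w x)) ^ (1/r')

/-- The linearized model Carleson operator `C_Ps f`. -/
def Cmodel {r' : ℝ} {C1 C2 C21 C22 : ℝ} (φ : Bitile C1 C2 C21 C22 → ℝ → ℂ)
    (𝒟 : VarData r') (Ps : Finset (Bitile C1 C2 C21 C22)) (f : ℝ → ℂ) (x : ℝ) : ℂ :=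
  ∑ P ∈ Ps, inn f (φ P) * φ P x * 𝒟.dP P x

/-- The bilinear form `B_Ps(f,g) = Σ_P ⟨f, φ_{P₁}⟩ ⟨φ_{P₁} d_P, g w⟩`. -/
def Bform {r' : ℝ} {C1 C2 C21 C22 : ℝ} (w : ℝ → ℝ) (φ : Bitile C1 C2 C21 C22 → ℝ → ℂ)
    (𝒟 : VarData r') (Ps : Finset (Bitile C1 C2 C21 C22)) (f g : ℝ → ℂ) : ℂ :=
  ∑ P ∈ Ps, inn f (φ P) *
    ∫ x, φ P x * 𝒟.dP P x * (starRingEnd ℂ) (g x) * (w x : ℂ)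

/-- The variation-norm model operator `C_{r,Ps} f`. -/
def CrOp {C1 C2 C21 C22 : ℝ} (r : ℝ) (φ : Bitile C1 C2 C21 C22 → ℝ → ℂ)
    (Ps : Finset (Bitile C1 C2 C21 C22)) (f : ℝ → ℂ) (x : ℝ) : ℝ≥0∞ :=
  ⨆ (K : ℕ) (N : ℕ → ℝ) (_ : StrictMono N),
    ENNReal.ofReal ((∑ j ∈ Finset.range K,
      ‖∑ P ∈ Ps, inn f (φ P) * φ P x *
        (if N j ∉ P.ω.toSet ∧ N (j + 1) ∈ P.t2.ω.toSet then 1 else 0)‖ ^ r) ^ (1/r))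

/-- The `L^t` Hardy–Littlewood maximal function. -/
def Mt {E : Type*} [NormedAddCommGroup E] (t : ℝ) (f : ℝ → E) (x : ℝ) : ℝ≥0∞ :=
  ⨆ (a : ℝ) (b : ℝ) (_ : a ≤ x) (_ : x ≤ b) (_ : a < b),
    ((ENNReal.ofReal (b - a))⁻¹ * ∫⁻ y in Set.Icc a b, (‖f y‖₊ : ℝ≥0∞) ^ t) ^ (1/t)

/-- The dyadic interval `[n 2^k, (n+1) 2^k)`. -/
def dyadicIco (k n : ℤ) : Set ℝ := Set.Ico ((n : ℝ) * 2 ^ k) (((n : ℝ) + 1) * 2 ^ k)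

/-- The mean oscillation of `f` over the dyadic interval `[n 2^k, (n+1) 2^k)`. -/
def oscDy (f : ℝ → ℝ) (k n : ℤ) : ℝ :=
  ((2:ℝ) ^ k)⁻¹ * ∫ y in dyadicIco k n, |f y - ((2:ℝ) ^ k)⁻¹ * ∫ z in dyadicIco k n, f z|

/-- The dyadic sharp maximal function. -/
def sharpD (f : ℝ → ℝ) (x : ℝ) : ℝ≥0∞ :=
  ⨆ (k : ℤ) (n : ℤ) (_ : x ∈ dyadicIco k n), ENNReal.ofReal (oscDy f k n)

/-- The dyadic BMO norm. -/
def bmoD (f : ℝ → ℝ) : ℝ≥0∞ :=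
  ⨆ (k : ℤ) (n : ℤ), ENNReal.ofReal (oscDy f k n)

/-- The (unweighted) `L²` norm. -/
def l2Norm (f : ℝ → ℂ) : ℝ≥0∞ :=
  (∫⁻ x, (‖f x‖₊ : ℝ≥0∞) ^ (2:ℝ)) ^ ((1:ℝ)/2)

/-! ### Auxiliary development for the John–Nirenberg lemma -/

namespace SJN

open MeasureTheory Real Set

/-! #### Dyadic interval basics -/

lemma dyadic_len_pos {I : Ivl} (h : I.dyadic) : 0 < I.len := by
  obtain ⟨k, n, h1, h2⟩ := h
  have h2k : (0:ℝ) < 2 ^ k := zpow_pos (by norm_num) k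
  simp only [Ivl.len, h1, h2]; nlinarith

lemma dyadic_lo_lt_hi {I : Ivl} (h : I.dyadic) : I.lo < I.hi := by
  have := dyadic_len_pos h; simp only [Ivl.len] at this; linarith

lemma dyadic_mem_cases {k l : ℤ} (hkl : k ≤ l) {n m : ℤ} {x : ℝ}
    (hx1 : (n:ℝ) * 2^k ≤ x) (hx2 : x < ((n:ℝ)+1) * 2^k)
    (hy1 : (m:ℝ) * 2^l ≤ x) (hy2 : x < ((m:ℝ)+1) * 2^l) :
    (m:ℝ) * 2^l ≤ (n:ℝ)*2^k ∧ ((n:ℝ)+1)*2^k ≤ ((m:ℝ)+1)*2^l := by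
  have h2k : (0:ℝ) < 2 ^ k := zpow_pos (by norm_num) k
  set d : ℕ := (l - k).toNat with hd
  have hld : l = k + (d:ℤ) := by
    rw [hd, Int.toNat_of_nonneg (sub_nonneg.2 hkl)]; ring
  have h2l : (2:ℝ) ^ l = 2 ^ k * ((2:ℤ)^d : ℤ) := by
    rw [hld, zpow_add₀ (by norm_num : (2:ℝ) ≠ 0)]
    push_cast
    rw [zpow_natCast]
  set D : ℤ := 2 ^ d with hD
  have hmD : (m * D : ℤ) ≤ n := by
    have : ((m * D : ℤ) : ℝ) * 2 ^ k < ((n:ℝ) + 1) * 2 ^ k := by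
      push_cast
      calc (m:ℝ) * D * 2^k = (m:ℝ) * 2 ^ l := by rw [h2l]; push_cast; ring
        _ ≤ x := hy1
        _ < _ := hx2
    have h2 : ((m * D : ℤ) : ℝ) < (n:ℝ) + 1 := by
      have := lt_of_mul_lt_mul_right this h2k.le
      exact this
    have : (m * D : ℤ) < n + 1 := by exact_mod_cast h2
    omega
  have hnD : n + 1 ≤ (m + 1) * D := by
    have : ((n:ℝ)) * 2 ^ k < ((m+1) * D : ℤ) * 2 ^ k := by
      push_cast
      calc (n:ℝ) * 2^k ≤ x := hx1
        _ < ((m:ℝ)+1) * 2 ^ l := hy2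
        _ = ((m:ℝ)+1) * D * 2^k := by rw [h2l]; push_cast; ring
    have h2 : (n:ℝ) < ((m+1) * D : ℤ) := by
      have := lt_of_mul_lt_mul_right this h2k.le
      exact_mod_cast this
    have : n < (m + 1) * D := by exact_mod_cast h2
    omega
  constructor
  · calc (m:ℝ) * 2 ^ l = ((m * D : ℤ) : ℝ) * 2 ^ k := by rw [h2l]; push_cast; ring
      _ ≤ (n:ℝ) * 2 ^ k := by
        apply mul_le_mul_of_nonneg_right _ h2k.le
        exact_mod_cast hmD
  · calc ((n:ℝ)+1) * 2 ^ k
        ≤ (((m+1) * D : ℤ) : ℝ) * 2 ^ k := by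
          apply mul_le_mul_of_nonneg_right _ h2k.le
          exact_mod_cast hnD
      _ = ((m:ℝ)+1) * 2 ^ l := by rw [h2l]; push_cast; ring

lemma dyadic_nested {I J : Ivl} (hI : I.dyadic) (hJ : J.dyadic) {x : ℝ}
    (hxI : x ∈ I.toSet) (hxJ : x ∈ J.toSet) :
    I.toSet ⊆ J.toSet ∨ J.toSet ⊆ I.toSet := by
  obtain ⟨k, n, h1, h2⟩ := hI
  obtain ⟨l, m, h3, h4⟩ := hJ
  simp only [Ivl.toSet, Set.mem_Ico] at hxI hxJ
  rcases le_total k l with hkl | hlk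
  · left
    have := dyadic_mem_cases hkl (h1 ▸ hxI.1) (h2 ▸ hxI.2) (h3 ▸ hxJ.1) (h4 ▸ hxJ.2)
    simp only [Ivl.toSet, h1, h2, h3, h4]
    exact Set.Ico_subset_Ico this.1 this.2
  · right
    have := dyadic_mem_cases hlk (h3 ▸ hxJ.1) (h4 ▸ hxJ.2) (h1 ▸ hxI.1) (h2 ▸ hxI.2)
    simp only [Ivl.toSet, h1, h2, h3, h4]
    exact Set.Ico_subset_Ico this.1 this.2

lemma sub_facts {I J : Ivl} (hI : I.lo < I.hi) (h : I.toSet ⊆ J.toSet) :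
    J.lo ≤ I.lo ∧ I.hi ≤ J.hi := (Set.Ico_subset_Ico_iff hI).mp h

lemma len_le {I J : Ivl} (hI : I.lo < I.hi) (h : I.toSet ⊆ J.toSet) : I.len ≤ J.len := by
  have := sub_facts hI h; simp only [Ivl.len]; linarith [this.1, this.2]

lemma toSet_eq_of_subset_of_len_le {I J : Ivl} (hI : I.lo < I.hi)
    (h : I.toSet ⊆ J.toSet) (hl : J.len ≤ I.len) : I.toSet = J.toSet := by
  obtain ⟨h1, h2⟩ := sub_facts hI h
  simp only [Ivl.len] at hl
  have hlo : I.lo = J.lo := le_antisymm (by linarith) h1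
  have hhi : I.hi = J.hi := le_antisymm h2 (by linarith)
  simp only [Ivl.toSet, hlo, hhi]

lemma ivl_eq_of_toSet_eq {I J : Ivl} (hI : I.lo < I.hi) (h : I.toSet = J.toSet) : I = J := by
  have := (Set.Ico_eq_Ico_iff (Or.inl hI)).mp h
  cases I; cases J; simp_all [Ivl.toSet]

lemma toSet_nonempty {I : Ivl} (hI : I.lo < I.hi) : I.toSet.Nonempty :=
  Set.nonempty_Ico.2 hI

lemma measurableSet_toSet (I : Ivl) : MeasurableSet I.toSet := measurableSet_Ico

/-! #### Weight basics -/

lemma wIco_ne_top {w : ℝ → ℝ} (hw : IsWeight w) (a b : ℝ) :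
    wMeasure w (Set.Ico a b) ≠ ⊤ := by
  have h1 : wMeasure w (Set.Ico a b) = ∫⁻ x in Set.Ico a b, ENNReal.ofReal (w x) :=
    withDensity_apply _ measurableSet_Ico
  have hInt : IntegrableOn w (Set.Icc a b) volume :=
    hw.locInt.integrableOn_isCompact isCompact_Icc
  have h2 : (∫⁻ x in Set.Ico a b, ENNReal.ofReal (w x)) ≤
      ∫⁻ x in Set.Icc a b, ENNReal.ofReal (w x) :=
    lintegral_mono' (Measure.restrict_mono Set.Ico_subset_Icc_self le_rfl) le_rfl
  rw [h1]
  exact ne_top_of_le_ne_top hInt.lintegral_lt_top.ne h2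

lemma wIco_ne_zero {w : ℝ → ℝ} (hw : IsWeight w) {a b : ℝ} (h : a < b) :
    wMeasure w (Set.Ico a b) ≠ 0 := by
  intro h00
  have h0 : (volume.withDensity fun x => ENNReal.ofReal (w x)) (Set.Ico a b) = 0 := h00
  rw [withDensity_apply _ measurableSet_Ico,
    lintegral_eq_zero_iff hw.meas.ennreal_ofReal, Filter.EventuallyEq,
    ae_restrict_iff' measurableSet_Ico] at h0
  have hae : ∀ᵐ x : ℝ, x ∉ Set.Ico a b := by
    filter_upwards [hw.pos, h0] with x h1 h2 hx
    have h3 := h2 hx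
    simp only [Pi.zero_apply, ENNReal.ofReal_eq_zero] at h3
    linarith
  have hvol : volume (Set.Ico a b) = 0 := by
    rw [MeasureTheory.ae_iff] at hae
    simpa [Set.Ico] using hae
  rw [Real.volume_Ico] at hvol
  rw [ENNReal.ofReal_eq_zero] at hvol
  linarith

lemma wtop_ne_zero {w : ℝ → ℝ} (hw : IsWeight w) {I : Ivl} (hI : I.dyadic) :
    wSet w I.toSet ≠ 0 := wIco_ne_zero hw (dyadic_lo_lt_hi hI)

lemma wtop_ne_top {w : ℝ → ℝ} (hw : IsWeight w) (I : Ivl) :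
    wSet w I.toSet ≠ ⊤ := wIco_ne_top hw _ _

lemma ennreal_cancel {a Y R : ℝ≥0∞} (ha0 : a ≠ 0) (hat : a ≠ ⊤) (h : a * Y ≤ R) :
    Y ≤ a⁻¹ * R := by
  rw [← one_mul Y, ← ENNReal.inv_mul_cancel ha0 hat, mul_assoc]
  exact mul_le_mul_right h _

/-! #### The square function -/

variable {C1 C2 C21 C22 : ℝ}

def gg (φ : Bitile C1 C2 C21 C22 → ℝ → ℂ) (f : ℝ → ℂ)
    (Q : Finset (Bitile C1 C2 C21 C22)) (x : ℝ) : ℝ :=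
  ∑ P ∈ Q, ‖inn f (φ P)‖ ^ 2 / P.I.len * P.I.toSet.indicator (fun _ => (1:ℝ)) x

lemma SQfn_eq (φ : Bitile C1 C2 C21 C22 → ℝ → ℂ) (f : ℝ → ℂ)
    (Q : Finset (Bitile C1 C2 C21 C22)) (x : ℝ) :
    SQfn φ f Q x = (gg φ f Q x) ^ ((1:ℝ)/2) := rfl

lemma bitile_len_pos (P : Bitile C1 C2 C21 C22) : 0 < P.I.len := dyadic_len_pos P.t1.dyI

lemma term_nonneg (φ : Bitile C1 C2 C21 C22 → ℝ → ℂ) (f : ℝ → ℂ)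
    (P : Bitile C1 C2 C21 C22) (x : ℝ) :
    0 ≤ ‖inn f (φ P)‖ ^ 2 / P.I.len * P.I.toSet.indicator (fun _ => (1:ℝ)) x := by
  apply mul_nonneg (div_nonneg (sq_nonneg _) (bitile_len_pos P).le)
  exact Set.indicator_nonneg (fun _ _ => zero_le_one) x

lemma gg_nonneg (φ : Bitile C1 C2 C21 C22 → ℝ → ℂ) (f : ℝ → ℂ)
    (Q : Finset (Bitile C1 C2 C21 C22)) (x : ℝ) : 0 ≤ gg φ f Q x :=
  Finset.sum_nonneg fun P _ => term_nonneg φ f P x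

lemma gg_mono (φ : Bitile C1 C2 C21 C22 → ℝ → ℂ) (f : ℝ → ℂ)
    {Q' Q : Finset (Bitile C1 C2 C21 C22)} (h : Q' ⊆ Q) (x : ℝ) :
    gg φ f Q' x ≤ gg φ f Q x :=
  Finset.sum_le_sum_of_subset_of_nonneg h fun P _ _ => term_nonneg φ f P x

lemma measurable_gg (φ : Bitile C1 C2 C21 C22 → ℝ → ℂ) (f : ℝ → ℂ)
    (Q : Finset (Bitile C1 C2 C21 C22)) : Measurable (gg φ f Q) := by
  apply Finset.measurable_sum
  intro P _
  exact (measurable_const.indicator (measurableSet_toSet P.I)).const_mul _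

lemma setlt (φ : Bitile C1 C2 C21 C22 → ℝ → ℂ) (f : ℝ → ℂ)
    (Q : Finset (Bitile C1 C2 C21 C22)) {t : ℝ} (ht : 0 ≤ t) :
    {x | t < SQfn φ f Q x} = {x | t^2 < gg φ f Q x} := by
  ext x
  simp only [Set.mem_setOf_eq, SQfn_eq]
  rw [← Real.sqrt_eq_rpow]
  exact Real.lt_sqrt ht

lemma gg_support (φ : Bitile C1 C2 C21 C22 → ℝ → ℂ) (f : ℝ → ℂ)
    {Q : Finset (Bitile C1 C2 C21 C22)} {S : Set ℝ}
    (hQ : ∀ P ∈ Q, P.I.toSet ⊆ S) {x : ℝ} (hx : 0 < gg φ f Q x) : x ∈ S := by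
  obtain ⟨P, hP, hPne⟩ := Finset.exists_ne_zero_of_sum_ne_zero hx.ne'
  by_cases hxP : x ∈ P.I.toSet
  · exact hQ P hP hxP
  · exact absurd (by simp [Set.indicator_of_notMem hxP]) hPne

/-! #### Extracting information from the weak size -/

lemma weak_bound {w : ℝ → ℝ} (hw : IsWeight w) {Ps : Finset (Bitile C1 C2 C21 C22)}
    {φ : Bitile C1 C2 C21 C22 → ℝ → ℂ} {f : ℝ → ℂ} {s : ℝ}
    (hσ : sizeWk w φ f Ps ≤ ENNReal.ofReal s)
    (T' : PTree C1 C2 C21 C22) (h1 : T'.bitiles ⊆ Ps) (h2 : T'.overlapping)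
    {u : ℝ} (hu : 0 < u) :
    wMeasure w {x | u^2 < gg φ f T'.bitiles x} ≤
      (ENNReal.ofReal u)⁻¹ * (ENNReal.ofReal s * wSet w T'.top.toSet) := by
  set Y := wMeasure w {x | u^2 < gg φ f T'.bitiles x} with hY
  have hne0 : wSet w T'.top.toSet ≠ 0 := wtop_ne_zero hw T'.dytop
  have hnetop : wSet w T'.top.toSet ≠ ⊤ := wtop_ne_top hw _
  have hset : {x | ((u.toNNReal : ℝ)) < SQfn φ f T'.bitiles x}
      = {x | u^2 < gg φ f T'.bitiles x} := by
    rw [Real.coe_toNNReal _ hu.le]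
    exact setlt φ f T'.bitiles hu.le
  have hterm : (wSet w T'.top.toSet)⁻¹ * (ENNReal.ofReal u * Y) ≤ sizeWk w φ f Ps := by
    have step1 : ENNReal.ofReal u * Y ≤
        ⨆ t : ℝ≥0, (t : ℝ≥0∞) * wMeasure w {x | (t:ℝ) < SQfn φ f T'.bitiles x} := by
      have heq : ENNReal.ofReal u * Y
          = (u.toNNReal : ℝ≥0∞) *
            wMeasure w {x | ((u.toNNReal : ℝ)) < SQfn φ f T'.bitiles x} := by
        rw [hset]; rfl
      rw [heq]
      exact le_iSup (fun t : ℝ≥0 =>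
        (t : ℝ≥0∞) * wMeasure w {x | (t:ℝ) < SQfn φ f T'.bitiles x}) u.toNNReal
    calc (wSet w T'.top.toSet)⁻¹ * (ENNReal.ofReal u * Y)
        ≤ (wSet w T'.top.toSet)⁻¹ *
          ⨆ t : ℝ≥0, (t : ℝ≥0∞) * wMeasure w {x | (t:ℝ) < SQfn φ f T'.bitiles x} :=
          mul_le_mul_right step1 _
      _ ≤ sizeWk w φ f Ps :=
          le_iSup_of_le T' (le_iSup_of_le h1 (le_iSup_of_le h2 le_rfl))
  have hXR : ENNReal.ofReal u * Y ≤ ENNReal.ofReal s * wSet w T'.top.toSet := by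
    calc ENNReal.ofReal u * Y
        = wSet w T'.top.toSet * ((wSet w T'.top.toSet)⁻¹ * (ENNReal.ofReal u * Y)) := by
          rw [← mul_assoc, ENNReal.mul_inv_cancel hne0 hnetop, one_mul]
      _ ≤ wSet w T'.top.toSet * ENNReal.ofReal s := mul_le_mul_right (hterm.trans hσ) _
      _ = ENNReal.ofReal s * wSet w T'.top.toSet := mul_comm _ _
  exact ennreal_cancel (ENNReal.ofReal_pos.mpr hu).ne' ENNReal.ofReal_ne_top hXR

/-! #### Splitting the local part of a tree below a dyadic interval into two trees -/

lemma bitile_omega_len (P : Bitile C1 C2 C21 C22) :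
    P.t1.ω.len = P.t2.ω.len ∧ P.I.len * P.t2.ω.len = 1 := by
  have h1 := P.t1.area
  have h2 := P.t2.area
  have hI : P.t1.I = P.t2.I := P.sameI
  have hIlen : 0 < P.t1.I.len := dyadic_len_pos P.t1.dyI
  constructor
  · apply mul_left_cancel₀ hIlen.ne'
    rw [h1, hI]; exact h2.symm
  · show P.t1.I.len * P.t2.ω.len = 1
    rw [hI]; exact h2

lemma split_bound {w : ℝ → ℝ} (hC2 : 1 ≤ C2) (hw : IsWeight w)
    {Ps : Finset (Bitile C1 C2 C21 C22)}
    {φ : Bitile C1 C2 C21 C22 → ℝ → ℂ} {f : ℝ → ℂ} {s : ℝ}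
    (hσ : sizeWk w φ f Ps ≤ ENNReal.ofReal s)
    (T : PTree C1 C2 C21 C22) (hsub : T.bitiles ⊆ Ps) (hov : T.overlapping)
    (J : Ivl) (hJd : J.dyadic) (hJtop : J.toSet ⊆ T.top.toSet)
    {u : ℝ} (hu : 0 < u) :
    wMeasure w {x | 2*u^2 < gg φ f (T.bitiles.filter fun P => P.I.toSet ⊆ J.toSet) x}
      ≤ 2 * ((ENNReal.ofReal u)⁻¹ * (ENNReal.ofReal s * wSet w J.toSet)) := by
  classical
  have hJlen : 0 < J.len := dyadic_len_pos hJd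
  have hTlen : 0 < T.top.len := dyadic_len_pos T.dytop
  have hJT : J.len ≤ T.top.len := len_le (dyadic_lo_lt_hi hJd) hJtop
  have hδJ0 : 0 < 1/(2*J.len) := by positivity
  have hδT0 : 0 < 1/(2*T.top.len) := by positivity
  have hδTJ : 1/(2*T.top.len) ≤ 1/(2*J.len) :=
    one_div_le_one_div_of_le (by linarith) (by linarith)
  set D := T.bitiles.filter (fun P => P.I.toSet ⊆ J.toSet) with hD
  have hDT : D ⊆ T.bitiles := Finset.filter_subset _ _
  -- the collected facts for each bitile of D
  have key : ∀ P ∈ D,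
      (Ivl.dilate C2 P.t1.ω).lo ≤ (Ivl.dilate C2 P.t2.ω).lo - C2 * P.t2.ω.len
      ∧ (Ivl.dilate C2 P.t2.ω).lo ≤ T.ξ
      ∧ T.ξ < (Ivl.dilate C2 P.t2.ω).hi
      ∧ T.ξ + 1/(2*T.top.len) ≤ (Ivl.dilate C2 P.t2.ω).hi
      ∧ (Ivl.dilate C2 P.t2.ω).hi = (Ivl.dilate C2 P.t2.ω).lo + C2 * P.t2.ω.len
      ∧ 2*(1/(2*J.len)) ≤ P.t2.ω.len
      ∧ P.I.toSet ⊆ J.toSet := by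
    intro P hP
    rw [hD, Finset.mem_filter] at hP
    obtain ⟨hPT, hPJ⟩ := hP
    have hL12 : P.t1.ω.len = P.t2.ω.len := (bitile_omega_len P).1
    have harea : P.I.len * P.t2.ω.len = 1 := (bitile_omega_len P).2
    have hIlen : 0 < P.I.len := bitile_len_pos P
    have hid1 : (Ivl.dilate C2 P.t1.ω).lo
        = (Ivl.dilate C2 P.t1.ω).hi - C2 * P.t1.ω.len := by
      simp only [Ivl.dilate, Ivl.mid, Ivl.len]; ring
    have hid2 : (Ivl.dilate C2 P.t2.ω).hi
        = (Ivl.dilate C2 P.t2.ω).lo + C2 * P.t2.ω.len := by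
      simp only [Ivl.dilate, Ivl.mid, Ivl.len]; ring
    have hsep := P.sep
    have hovP := hov P hPT
    simp only [Ivl.toSet, Set.mem_Ico] at hovP
    have hwin : Set.Ico (T.ξ - 1/(2*T.top.len)) (T.ξ + 1/(2*T.top.len)) ⊆
        Set.Ico P.ωt.lo P.ωt.hi := (T.compat P hPT).2
    rw [Set.Ico_subset_Ico_iff (by linarith : T.ξ - 1/(2*T.top.len) < T.ξ + 1/(2*T.top.len))]
      at hwin
    have hk4 : T.ξ + 1/(2*T.top.len) ≤ (Ivl.dilate C2 P.t2.ω).hi := hwin.2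
    have hlen : P.I.len ≤ J.len := len_le (dyadic_lo_lt_hi P.t1.dyI) hPJ
    have hL2 : P.t2.ω.len = 1/P.I.len := (eq_div_iff hIlen.ne').mpr (by linarith)
    have hk6 : 2*(1/(2*J.len)) ≤ P.t2.ω.len := by
      rw [hL2]
      have h1 : 2*(1/(2*J.len)) = 1/J.len := by field_simp
      rw [h1]
      exact one_div_le_one_div_of_le hIlen hlen
    rw [hL12] at hid1
    exact ⟨by linarith, hovP.1, hovP.2, hk4, hid2, hk6, hPJ⟩
  set ξ' := T.ξ - 1/(2*J.len) + 1/(2*T.top.len) with hξ'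
  set Dm := D.filter (fun P => (Ivl.dilate C2 P.t2.ω).lo ≤ ξ') with hDm
  set Dp := D.filter (fun P => ¬((Ivl.dilate C2 P.t2.ω).lo ≤ ξ')) with hDp
  have hDmD : Dm ⊆ D := Finset.filter_subset _ _
  have hDpD : Dp ⊆ D := Finset.filter_subset _ _
  have hL2nn : ∀ P ∈ D, (0:ℝ) ≤ C2 * P.t2.ω.len - P.t2.ω.len := by
    intro P hP
    obtain ⟨_, _, _, _, _, k6, _⟩ := key P hP
    nlinarith
  -- the two trees
  let Tm : PTree C1 C2 C21 C22 :=
    { bitiles := Dm, top := J, ξ := ξ', dytop := hJd,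
      compat := by
        intro P hP
        have hPD := hDmD hP
        obtain ⟨k1, k2, k3, k4, k5, k6, k7⟩ := key P hPD
        have hlo : (Ivl.dilate C2 P.t2.ω).lo ≤ ξ' := (Finset.mem_filter.mp hP).2
        have hnn := hL2nn P hPD
        refine ⟨k7, ?_⟩
        have h1 : (Ivl.dilate C2 P.t1.ω).lo ≤ ξ' - 1/(2*J.len) := by linarith
        have h2 : ξ' + 1/(2*J.len) ≤ (Ivl.dilate C2 P.t2.ω).hi := by
          rw [hξ']; linarith
        exact Set.Ico_subset_Ico h1 h2 }
  let Tp : PTree C1 C2 C21 C22 :=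
    { bitiles := Dp, top := J, ξ := T.ξ, dytop := hJd,
      compat := by
        intro P hP
        have hPD := hDpD hP
        obtain ⟨k1, k2, k3, k4, k5, k6, k7⟩ := key P hPD
        have hlo : ¬((Ivl.dilate C2 P.t2.ω).lo ≤ ξ') := (Finset.mem_filter.mp hP).2
        push_neg at hlo
        have hnn := hL2nn P hPD
        refine ⟨k7, ?_⟩
        have h1 : (Ivl.dilate C2 P.t1.ω).lo ≤ T.ξ - 1/(2*J.len) := by linarith
        have h2 : T.ξ + 1/(2*J.len) ≤ (Ivl.dilate C2 P.t2.ω).hi := by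
          rw [hξ'] at hlo; linarith
        exact Set.Ico_subset_Ico h1 h2 }
  have hTmov : Tm.overlapping := by
    intro P hP
    have hPD := hDmD hP
    obtain ⟨k1, k2, k3, k4, k5, k6, k7⟩ := key P hPD
    have hlo : (Ivl.dilate C2 P.t2.ω).lo ≤ ξ' := (Finset.mem_filter.mp hP).2
    simp only [Ivl.toSet, Set.mem_Ico]
    exact ⟨hlo, by show T.ξ - 1/(2*J.len) + 1/(2*T.top.len) < _; linarith⟩
  have hTpov : Tp.overlapping := by
    intro P hP
    have hPD := hDpD hP
    obtain ⟨k1, k2, k3, k4, k5, k6, k7⟩ := key P hPD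
    simp only [Ivl.toSet, Set.mem_Ico]
    exact ⟨k2, k3⟩
  have hTmsub : Tm.bitiles ⊆ Ps := hDmD.trans (hDT.trans hsub)
  have hTpsub : Tp.bitiles ⊆ Ps := hDpD.trans (hDT.trans hsub)
  -- pointwise splitting
  have hsplit : ∀ x, gg φ f D x = gg φ f Dm x + gg φ f Dp x := by
    intro x
    simp only [gg, hDm, hDp]
    exact (Finset.sum_filter_add_sum_filter_not D _ _).symm
  have hsubset : {x | 2*u^2 < gg φ f D x} ⊆
      {x | u^2 < gg φ f Dm x} ∪ {x | u^2 < gg φ f Dp x} := by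
    intro x hx
    simp only [Set.mem_setOf_eq] at hx
    rcases lt_or_ge (u^2) (gg φ f Dm x) with h | h
    · exact Or.inl h
    · right
      simp only [Set.mem_setOf_eq]
      have := hsplit x
      linarith
  calc wMeasure w {x | 2*u^2 < gg φ f D x}
      ≤ wMeasure w ({x | u^2 < gg φ f Dm x} ∪ {x | u^2 < gg φ f Dp x}) :=
        measure_mono hsubset
    _ ≤ wMeasure w {x | u^2 < gg φ f Dm x} + wMeasure w {x | u^2 < gg φ f Dp x} :=
        measure_union_le _ _
    _ ≤ (ENNReal.ofReal u)⁻¹ * (ENNReal.ofReal s * wSet w J.toSet)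
        + (ENNReal.ofReal u)⁻¹ * (ENNReal.ofReal s * wSet w J.toSet) := by
        gcongr
        · exact weak_bound hw hσ Tm hTmsub hTmov hu
        · exact weak_bound hw hσ Tp hTpsub hTpov hu
    _ = 2 * ((ENNReal.ofReal u)⁻¹ * (ENNReal.ofReal s * wSet w J.toSet)) :=
        (two_mul _).symm

/-! #### The good-lambda inequality via a dyadic stopping time -/

lemma good_lambda {w : ℝ → ℝ} (hC2 : 1 ≤ C2) (hw : IsWeight w)
    {Ps : Finset (Bitile C1 C2 C21 C22)}
    {φ : Bitile C1 C2 C21 C22 → ℝ → ℂ} {f : ℝ → ℂ} {s : ℝ}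
    (hσ : sizeWk w φ f Ps ≤ ENNReal.ofReal s)
    (T : PTree C1 C2 C21 C22) (hsub : T.bitiles ⊆ Ps) (hov : T.overlapping)
    {c : ℝ} (hc : 0 ≤ c) {u : ℝ} (hu : 0 < u) :
    wMeasure w {x | c + 2*u^2 < gg φ f T.bitiles x} ≤
      (2 * ((ENNReal.ofReal u)⁻¹ * ENNReal.ofReal s)) *
        wMeasure w {x | c < gg φ f T.bitiles x} := by
  classical
  set L := T.bitiles with hL
  -- the value of the square function as a sum over bitiles containing x
  have gval : ∀ (Q : Finset (Bitile C1 C2 C21 C22)) (x : ℝ), gg φ f Q x =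
      ∑ P ∈ Q.filter (fun P => x ∈ P.I.toSet), ‖inn f (φ P)‖ ^ 2 / P.I.len := by
    intro Q x
    simp only [gg]
    rw [← Finset.sum_filter_add_sum_filter_not Q (fun P => x ∈ P.I.toSet)
      (fun P => ‖inn f (φ P)‖ ^ 2 / P.I.len * P.I.toSet.indicator (fun _ => (1:ℝ)) x)]
    have h2 : ∑ P ∈ Q.filter (fun P => ¬ x ∈ P.I.toSet),
        ‖inn f (φ P)‖ ^ 2 / P.I.len * P.I.toSet.indicator (fun _ => (1:ℝ)) x = 0 := by
      apply Finset.sum_eq_zero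
      intro P hP
      rw [Finset.mem_filter] at hP
      rw [Set.indicator_of_notMem hP.2, mul_zero]
    rw [h2, add_zero]
    apply Finset.sum_congr rfl
    intro P hP
    rw [Finset.mem_filter] at hP
    rw [Set.indicator_of_mem hP.2]
    ring
  have anonneg : ∀ P : Bitile C1 C2 C21 C22, 0 ≤ ‖inn f (φ P)‖ ^ 2 / P.I.len :=
    fun P => div_nonneg (sq_nonneg _) (bitile_len_pos P).le
  -- nesting helper
  have nest : ∀ {I I' : Ivl}, I.dyadic → I'.dyadic → (∃ y, y ∈ I.toSet ∧ y ∈ I'.toSet) →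
      I.len ≤ I'.len → I.toSet ⊆ I'.toSet := by
    rintro I I' hI hI' ⟨y, hy, hy'⟩ hlen
    rcases dyadic_nested hI hI' hy hy' with h | h
    · exact h
    · exact (toSet_eq_of_subset_of_len_le (dyadic_lo_lt_hi hI') h hlen).symm.subset
  -- the candidates and the stopping intervals
  set β : Ivl → ℝ := fun J => ∑ P ∈ L.filter (fun P => J.toSet ⊆ P.I.toSet),
    ‖inn f (φ P)‖ ^ 2 / P.I.len with hβ
  set 𝒞 : Finset Ivl := L.image Bitile.I ∪ {T.top} with h𝒞
  have h𝒞dy : ∀ J ∈ 𝒞, J.dyadic ∧ J.toSet ⊆ T.top.toSet := by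
    intro J hJ
    rw [h𝒞, Finset.mem_union, Finset.mem_image] at hJ
    rcases hJ with ⟨P, hP, rfl⟩ | hJ
    · exact ⟨P.t1.dyI, (T.compat P hP).1⟩
    · rw [Finset.mem_singleton] at hJ; subst hJ
      exact ⟨T.dytop, subset_rfl⟩
  set 𝒥 : Finset Ivl := 𝒞.filter (fun J => c < β J ∧ ∀ J' ∈ 𝒞,
      J.toSet ⊆ J'.toSet → J.toSet ≠ J'.toSet → β J' ≤ c) with h𝒥
  have h𝒥𝒞 : 𝒥 ⊆ 𝒞 := Finset.filter_subset _ _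
  have h𝒥mem : ∀ J ∈ 𝒥, (c < β J) ∧ ∀ J' ∈ 𝒞, J.toSet ⊆ J'.toSet →
      J.toSet ≠ J'.toSet → β J' ≤ c := by
    intro J hJ; rw [h𝒥, Finset.mem_filter] at hJ; exact hJ.2
  -- every point of a stopping interval lies in the superlevel set
  have hβg : ∀ J ∈ 𝒞, ∀ y ∈ J.toSet, β J ≤ gg φ f L y := by
    intro J _ y hy
    rw [hβ, gval L y]
    apply Finset.sum_le_sum_of_subset_of_nonneg
    · intro P hP
      rw [Finset.mem_filter] at hP ⊢
      exact ⟨hP.1, hP.2 hy⟩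
    · intro P _ _
      exact anonneg P
  -- covering: every point of the superlevel set lies in a stopping interval
  have hcover : ∀ x, c < gg φ f L x → ∃ J ∈ 𝒥, x ∈ J.toSet := by
    intro x hx
    set V := L.filter (fun P => x ∈ P.I.toSet) with hV
    have hVne : V.Nonempty := by
      by_contra hemp
      rw [Finset.not_nonempty_iff_eq_empty] at hemp
      rw [gval L x, ← hV, hemp, Finset.sum_empty] at hx
      linarith
    obtain ⟨Q, hQV, hQmin⟩ := Finset.exists_min_image V (fun P => P.I.len) hVne
    have hQV' := hQV
    rw [hV, Finset.mem_filter] at hQV'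
    have hJ0 : Q.I ∈ 𝒞 := by
      rw [h𝒞, Finset.mem_union]; left
      exact Finset.mem_image_of_mem _ hQV'.1
    have hVup : V ⊆ L.filter (fun P => Q.I.toSet ⊆ P.I.toSet) := by
      intro P hP
      have hPV := hP
      rw [hV, Finset.mem_filter] at hPV
      rw [Finset.mem_filter]
      exact ⟨hPV.1, nest Q.t1.dyI P.t1.dyI ⟨x, hQV'.2, hPV.2⟩ (hQmin P hP)⟩
    have hβJ0 : c < β Q.I := by
      calc c < gg φ f L x := hx
        _ = ∑ P ∈ V, ‖inn f (φ P)‖ ^ 2 / P.I.len := by rw [gval L x, hV]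
        _ ≤ β Q.I := Finset.sum_le_sum_of_subset_of_nonneg hVup (fun P _ _ => anonneg P)
    set W := 𝒞.filter (fun J' => Q.I.toSet ⊆ J'.toSet ∧ c < β J') with hW
    have hQW : Q.I ∈ W := by
      rw [hW, Finset.mem_filter]; exact ⟨hJ0, subset_rfl, hβJ0⟩
    obtain ⟨Js, hJsW, hJsmax⟩ := Finset.exists_max_image W (fun J => J.len) ⟨_, hQW⟩
    rw [hW, Finset.mem_filter] at hJsW
    refine ⟨Js, ?_, hJsW.2.1 hQV'.2⟩
    rw [h𝒥, Finset.mem_filter]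
    refine ⟨hJsW.1, hJsW.2.2, ?_⟩
    intro J'' hJ'' hsub' hne'
    by_contra hgt
    push_neg at hgt
    have hJ''W : J'' ∈ W := by
      rw [hW, Finset.mem_filter]
      exact ⟨hJ'', hJsW.2.1.trans hsub', hgt⟩
    have hlen'' := hJsmax J'' hJ''W
    exact hne' (toSet_eq_of_subset_of_len_le
      (dyadic_lo_lt_hi (h𝒞dy Js hJsW.1).1) hsub' hlen'')
  -- disjointness of the stopping intervals
  have hdpair : ∀ J ∈ 𝒥, ∀ J' ∈ 𝒥, J ≠ J' → Disjoint J.toSet J'.toSet := by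
    intro J hJ J' hJ' hne
    rw [Set.disjoint_left]
    intro x hxJ hxJ'
    have hdy := (h𝒞dy J (h𝒥𝒞 hJ)).1
    have hdy' := (h𝒞dy J' (h𝒥𝒞 hJ')).1
    rcases dyadic_nested hdy hdy' hxJ hxJ' with h | h
    · by_cases heq : J.toSet = J'.toSet
      · exact hne (ivl_eq_of_toSet_eq (dyadic_lo_lt_hi hdy) heq)
      · have := (h𝒥mem J hJ).2 J' (h𝒥𝒞 hJ') h heq
        linarith [(h𝒥mem J' hJ').1]
    · by_cases heq : J'.toSet = J.toSet
      · exact hne (ivl_eq_of_toSet_eq (dyadic_lo_lt_hi hdy') heq).symm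
      · have := (h𝒥mem J' hJ').2 J (h𝒥𝒞 hJ) h heq
        linarith [(h𝒥mem J hJ).1]
  -- the tail bound on each stopping interval
  have htail : ∀ J ∈ 𝒥, ∀ x ∈ J.toSet,
      gg φ f L x ≤ c + gg φ f (L.filter fun P => P.I.toSet ⊆ J.toSet) x := by
    intro J hJ x hxJ
    have hdyJ := (h𝒞dy J (h𝒥𝒞 hJ)).1
    have hsplit : gg φ f L x = gg φ f (L.filter fun P => P.I.toSet ⊆ J.toSet) x
        + gg φ f (L.filter fun P => ¬ P.I.toSet ⊆ J.toSet) x := by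
      simp only [gg]
      exact (Finset.sum_filter_add_sum_filter_not L _ _).symm
    set N := L.filter (fun P => ¬ P.I.toSet ⊆ J.toSet) with hN
    have hbound : gg φ f N x ≤ c := by
      rw [gval N x]
      set M := N.filter (fun P => x ∈ P.I.toSet) with hM
      have hMstrict : ∀ P ∈ M, J.toSet ⊆ P.I.toSet ∧ J.toSet ≠ P.I.toSet := by
        intro P hP
        rw [hM, Finset.mem_filter] at hP
        obtain ⟨hPN, hPx⟩ := hP
        rw [hN, Finset.mem_filter] at hPN
        obtain ⟨hPL, hPnsub⟩ := hPN
        have hsubJP : J.toSet ⊆ P.I.toSet := by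
          rcases dyadic_nested P.t1.dyI hdyJ hPx hxJ with h | h
          · exact absurd h hPnsub
          · exact h
        refine ⟨hsubJP, fun heq => hPnsub heq.symm.subset⟩
      rcases Finset.eq_empty_or_nonempty M with hMe | hMne
      · rw [hMe, Finset.sum_empty]; exact hc
      obtain ⟨Qm, hQmM, hQmmin⟩ := Finset.exists_min_image M (fun P => P.I.len) hMne
      have hQmL : Qm ∈ L := by
        have := hQmM
        rw [hM, Finset.mem_filter, hN, Finset.mem_filter] at this
        exact this.1.1
      have hQm𝒞 : Qm.I ∈ 𝒞 := by
        rw [h𝒞, Finset.mem_union]; left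
        exact Finset.mem_image_of_mem _ hQmL
      obtain ⟨y, hy⟩ := toSet_nonempty (dyadic_lo_lt_hi hdyJ)
      have hMup : M ⊆ L.filter (fun P => Qm.I.toSet ⊆ P.I.toSet) := by
        intro P hP
        have hPL : P ∈ L := by
          have := hP
          rw [hM, Finset.mem_filter, hN, Finset.mem_filter] at this
          exact this.1.1
        rw [Finset.mem_filter]
        exact ⟨hPL, nest Qm.t1.dyI P.t1.dyI
          ⟨y, (hMstrict Qm hQmM).1 hy, (hMstrict P hP).1 hy⟩ (hQmmin P hP)⟩
      have hsum : ∑ P ∈ M, ‖inn f (φ P)‖ ^ 2 / P.I.len ≤ β Qm.I :=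
        Finset.sum_le_sum_of_subset_of_nonneg hMup (fun P _ _ => anonneg P)
      have hmax := (h𝒥mem J hJ).2 Qm.I hQm𝒞 (hMstrict Qm hQmM).1 (hMstrict Qm hQmM).2
      linarith
    have hnn := gg_nonneg φ f (L.filter fun P => P.I.toSet ⊆ J.toSet) x
    linarith
  -- assembly
  set K := 2 * ((ENNReal.ofReal u)⁻¹ * ENNReal.ofReal s) with hK
  have hA10 : {x | c + 2*u^2 < gg φ f L x} ⊆ {x | c < gg φ f L x} := by
    intro x hx
    simp only [Set.mem_setOf_eq] at hx ⊢
    nlinarith [sq_nonneg u]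
  have hA1union : {x | c + 2*u^2 < gg φ f L x} ⊆
      ⋃ J ∈ 𝒥, ({x | c + 2*u^2 < gg φ f L x} ∩ J.toSet) := by
    intro x hx
    obtain ⟨J, hJ, hxJ⟩ := hcover x (hA10 hx)
    exact Set.mem_biUnion hJ ⟨hx, hxJ⟩
  have hunionA0 : (⋃ J ∈ 𝒥, J.toSet) ⊆ {x | c < gg φ f L x} := by
    apply Set.iUnion₂_subset
    intro J hJ y hy
    have h1 := hβg J (h𝒥𝒞 hJ) y hy
    have h2 := (h𝒥mem J hJ).1
    simp only [Set.mem_setOf_eq]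
    linarith
  calc wMeasure w {x | c + 2*u^2 < gg φ f L x}
      ≤ wMeasure w (⋃ J ∈ 𝒥, ({x | c + 2*u^2 < gg φ f L x} ∩ J.toSet)) :=
        measure_mono hA1union
    _ ≤ ∑ J ∈ 𝒥, wMeasure w ({x | c + 2*u^2 < gg φ f L x} ∩ J.toSet) :=
        measure_biUnion_finset_le _ _
    _ ≤ ∑ J ∈ 𝒥, K * wMeasure w J.toSet := by
        apply Finset.sum_le_sum
        intro J hJ
        have hJdy := (h𝒞dy J (h𝒥𝒞 hJ)).1
        have hJsub := (h𝒞dy J (h𝒥𝒞 hJ)).2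
        have hstep : {x | c + 2*u^2 < gg φ f L x} ∩ J.toSet ⊆
            {x | 2*u^2 < gg φ f (L.filter fun P => P.I.toSet ⊆ J.toSet) x} := by
          rintro x ⟨hx1, hx2⟩
          simp only [Set.mem_setOf_eq] at hx1 ⊢
          have := htail J hJ x hx2
          linarith
        calc wMeasure w ({x | c + 2*u^2 < gg φ f L x} ∩ J.toSet)
            ≤ wMeasure w {x | 2*u^2 < gg φ f
                (L.filter fun P => P.I.toSet ⊆ J.toSet) x} := measure_mono hstep
          _ ≤ 2 * ((ENNReal.ofReal u)⁻¹ * (ENNReal.ofReal s * wSet w J.toSet)) :=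
              split_bound hC2 hw hσ T hsub hov J hJdy hJsub hu
          _ = K * wMeasure w J.toSet := by rw [hK]; show _ = _ * wSet w J.toSet; ring
    _ = K * ∑ J ∈ 𝒥, wMeasure w J.toSet := by rw [Finset.mul_sum]
    _ = K * wMeasure w (⋃ J ∈ 𝒥, J.toSet) := by
        rw [measure_biUnion_finset ?hd (fun J _ => measurableSet_toSet J)]
        case hd =>
          intro J hJ J' hJ' hne
          exact hdpair J (Finset.mem_coe.mp hJ) J' (Finset.mem_coe.mp hJ') hne
    _ ≤ K * wMeasure w {x | c < gg φ f L x} :=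
        mul_le_mul_right (measure_mono hunionA0) _

/-! #### Iterating the good-lambda inequality -/

lemma hard_tree {w : ℝ → ℝ} (hC2 : 1 ≤ C2) (hw : IsWeight w)
    {Ps : Finset (Bitile C1 C2 C21 C22)}
    {φ : Bitile C1 C2 C21 C22 → ℝ → ℂ} {f : ℝ → ℂ} {s : ℝ} (hs : 0 < s)
    (hσ : sizeWk w φ f Ps ≤ ENNReal.ofReal s)
    (T : PTree C1 C2 C21 C22) (hsub : T.bitiles ⊆ Ps) (hov : T.overlapping)
    {p : ℝ} (hp : 1 < p) (n : ℕ) (hn : p ≤ n) :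
    (wSet w T.top.toSet) ^ (-(1/p) : ℝ) *
      (∫⁻ x, ENNReal.ofReal (SQfn φ f T.bitiles x) ^ p ∂(wMeasure w)) ^ (1/p)
      ≤ (2:ℝ≥0∞)^(2*n+4) * ENNReal.ofReal s := by
  classical
  have hp0 : (0:ℝ) < p := by linarith
  set u : ℝ := 2^(n+2) * s with hu_def
  have hupos : 0 < u := by positivity
  set W := wSet w T.top.toSet with hW
  have hWne0 : W ≠ 0 := wtop_ne_zero hw T.dytop
  have hWnetop : W ≠ ⊤ := wtop_ne_top hw _
  set A : ℕ → Set ℝ := fun k => {x | 4*u^2*(k:ℝ) < gg φ f T.bitiles x} with hA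
  have hAm : ∀ k, MeasurableSet (A k) :=
    fun k => measurableSet_lt measurable_const (measurable_gg φ f T.bitiles)
  -- the single-step factor
  have hKfac : 2 * ((ENNReal.ofReal u)⁻¹ * ENNReal.ofReal s) = ((2:ℝ≥0∞)^(n+1))⁻¹ := by
    have hofu : ENNReal.ofReal u = (2:ℝ≥0∞)^(n+2) * ENNReal.ofReal s := by
      rw [hu_def, ENNReal.ofReal_mul (by positivity)]
      congr 1
      rw [ENNReal.ofReal_pow (by norm_num : (0:ℝ) ≤ 2)]
      norm_num
    have h2ne0 : (2:ℝ≥0∞) ≠ 0 := by norm_num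
    have h2netop : (2:ℝ≥0∞) ≠ ⊤ := ENNReal.ofNat_ne_top
    have hsne0 : ENNReal.ofReal s ≠ 0 := (ENNReal.ofReal_pos.mpr hs).ne'
    rw [hofu, ENNReal.mul_inv (Or.inl (pow_ne_zero _ h2ne0))
      (Or.inl (ENNReal.pow_ne_top h2netop))]
    calc 2 * (((2:ℝ≥0∞)^(n+2))⁻¹ * (ENNReal.ofReal s)⁻¹ * ENNReal.ofReal s)
        = 2 * (((2:ℝ≥0∞)^(n+2))⁻¹ * ((ENNReal.ofReal s)⁻¹ * ENNReal.ofReal s)) := by ring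
      _ = 2 * ((2:ℝ≥0∞)^(n+2))⁻¹ := by
          rw [ENNReal.inv_mul_cancel hsne0 ENNReal.ofReal_ne_top, mul_one]
      _ = 2 * (((2:ℝ≥0∞)^(n+1))⁻¹ * 2⁻¹) := by
          rw [pow_succ, ENNReal.mul_inv (Or.inl (pow_ne_zero _ h2ne0))
            (Or.inl (ENNReal.pow_ne_top h2netop))]
      _ = ((2:ℝ≥0∞)^(n+1))⁻¹ * (2⁻¹ * 2) := by ring
      _ = ((2:ℝ≥0∞)^(n+1))⁻¹ := by
          rw [ENNReal.inv_mul_cancel h2ne0 h2netop, mul_one]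
  -- the iteration
  have hstep : ∀ k : ℕ, wMeasure w (A (k+1)) ≤ ((2:ℝ≥0∞)^(n+1))⁻¹ * wMeasure w (A k) := by
    intro k
    have hsub1 : A (k+1) ⊆ {x | 4*u^2*(k:ℝ) + 2*u^2 < gg φ f T.bitiles x} := by
      intro x hx
      simp only [hA, Set.mem_setOf_eq, Nat.cast_succ] at hx ⊢
      nlinarith [sq_nonneg u]
    calc wMeasure w (A (k+1))
        ≤ wMeasure w {x | 4*u^2*(k:ℝ) + 2*u^2 < gg φ f T.bitiles x} :=
          measure_mono hsub1
      _ ≤ (2 * ((ENNReal.ofReal u)⁻¹ * ENNReal.ofReal s)) *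
            wMeasure w {x | 4*u^2*(k:ℝ) < gg φ f T.bitiles x} :=
          good_lambda hC2 hw hσ T hsub hov (by positivity) hupos
      _ = ((2:ℝ≥0∞)^(n+1))⁻¹ * wMeasure w (A k) := by rw [hKfac]
  have hiter : ∀ k : ℕ, wMeasure w (A k) ≤ (((2:ℝ≥0∞)^(n+1))⁻¹)^k * W := by
    intro k
    induction k with
    | zero =>
      simp only [pow_zero, one_mul]
      apply measure_mono
      intro x hx
      simp only [hA, Set.mem_setOf_eq, Nat.cast_zero, mul_zero] at hx
      exact gg_support φ f (fun P hP => (T.compat P hP).1) hx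
    | succ k ih =>
      calc wMeasure w (A (k+1)) ≤ ((2:ℝ≥0∞)^(n+1))⁻¹ * wMeasure w (A k) := hstep k
        _ ≤ ((2:ℝ≥0∞)^(n+1))⁻¹ * ((((2:ℝ≥0∞)^(n+1))⁻¹)^k * W) := mul_le_mul_right ih _
        _ = (((2:ℝ≥0∞)^(n+1))⁻¹)^(k+1) * W := by rw [pow_succ]; ring
  -- pointwise domination of the integrand
  have hpt : ∀ x, ENNReal.ofReal (SQfn φ f T.bitiles x) ^ p ≤
      ∑' k : ℕ, (A k).indicator
        (fun _ => ENNReal.ofReal (4*u^2*((k:ℝ)+1)) ^ (p/2)) x := by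
    intro x
    have hgnn := gg_nonneg φ f T.bitiles x
    have hrw : ENNReal.ofReal (SQfn φ f T.bitiles x) ^ p
        = ENNReal.ofReal (gg φ f T.bitiles x) ^ (p/2) := by
      rw [SQfn_eq, ← ENNReal.ofReal_rpow_of_nonneg hgnn (by norm_num : (0:ℝ) ≤ 1/2),
        ← ENNReal.rpow_mul, show (1/2)*p = p/2 by ring]
    rw [hrw]
    rcases le_or_gt (gg φ f T.bitiles x) 0 with hg0 | hg0
    · have : gg φ f T.bitiles x = 0 := le_antisymm hg0 hgnn
      rw [this, ENNReal.ofReal_zero, ENNReal.zero_rpow_of_pos (by positivity)]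
      exact zero_le
    · have hex : ∃ k : ℕ, gg φ f T.bitiles x ≤ 4*u^2*(k:ℝ) := by
        obtain ⟨k, hk⟩ := exists_nat_ge (gg φ f T.bitiles x / (4*u^2))
        refine ⟨k, ?_⟩
        rw [div_le_iff₀ (by positivity)] at hk
        linarith [hk]
      set k0 := Nat.find hex with hk0
      have hk0spec : gg φ f T.bitiles x ≤ 4*u^2*(k0:ℝ) := Nat.find_spec hex
      have hk0pos : 0 < k0 := by
        rcases Nat.eq_zero_or_pos k0 with h0 | h0
        · exfalso
          have := hk0spec
          rw [h0] at this
          simp only [Nat.cast_zero, mul_zero] at this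
          linarith
        · exact h0
      obtain ⟨k1, hk1⟩ : ∃ k1, k0 = k1 + 1 := ⟨k0 - 1, (Nat.succ_pred_eq_of_pos hk0pos).symm⟩
      have hxA : x ∈ A k1 := by
        have := Nat.find_min hex (by omega : k1 < k0)
        simp only [hA, Set.mem_setOf_eq]
        push_neg at this
        exact this
      calc ENNReal.ofReal (gg φ f T.bitiles x) ^ (p/2)
          ≤ ENNReal.ofReal (4*u^2*((k1:ℝ)+1)) ^ (p/2) := by
            apply ENNReal.rpow_le_rpow _ (by positivity)
            apply ENNReal.ofReal_le_ofReal
            have : ((k0:ℝ)) = (k1:ℝ) + 1 := by rw [hk1]; push_cast; ring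
            linarith [hk0spec, this ▸ hk0spec]
        _ = (A k1).indicator
            (fun _ => ENNReal.ofReal (4*u^2*((k1:ℝ)+1)) ^ (p/2)) x := by
            rw [Set.indicator_of_mem hxA]
        _ ≤ _ := ENNReal.le_tsum k1
  -- the integral bound
  have hq : (2:ℝ≥0∞) ≠ 0 := by norm_num
  have hqt : (2:ℝ≥0∞) ≠ ⊤ := ENNReal.ofNat_ne_top
  have hqk : ∀ k : ℕ, (2:ℝ≥0∞)^((k+1)*n) * (((2:ℝ≥0∞)^(n+1))⁻¹)^k
      = 2^n * (2⁻¹)^k := by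
    intro k
    rw [← ENNReal.inv_pow, ← pow_mul, show (k+1)*n = k*n + n by ring,
      show (n+1)*k = k*n + k by ring, pow_add, pow_add,
      ENNReal.mul_inv (Or.inl (pow_ne_zero _ hq)) (Or.inl (ENNReal.pow_ne_top hqt))]
    calc (2:ℝ≥0∞)^(k*n) * 2^n * ((2^(k*n))⁻¹ * (2^k)⁻¹)
        = ((2:ℝ≥0∞)^(k*n) * (2^(k*n))⁻¹) * (2^n * (2^k)⁻¹) := by ring
      _ = 1 * ((2:ℝ≥0∞)^n * (2^k)⁻¹) := by
          rw [ENNReal.mul_inv_cancel (pow_ne_zero _ hq) (ENNReal.pow_ne_top hqt)]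
      _ = 2^n * (2⁻¹)^k := by rw [one_mul, ENNReal.inv_pow]
  have hterm : ∀ k : ℕ, ENNReal.ofReal (4*u^2*((k:ℝ)+1)) ^ (p/2) * wMeasure w (A k)
      ≤ ENNReal.ofReal (4*u^2) ^ (p/2) * W * (2^n * (2⁻¹)^k) := by
    intro k
    have h1 : ENNReal.ofReal (4*u^2*((k:ℝ)+1)) ^ (p/2)
        = ENNReal.ofReal (4*u^2) ^ (p/2) * ENNReal.ofReal ((k:ℝ)+1) ^ (p/2) := by
      rw [ENNReal.ofReal_mul (by positivity), ENNReal.mul_rpow_of_nonneg _ _ (by positivity)]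
    have h2 : ENNReal.ofReal ((k:ℝ)+1) ^ (p/2) ≤ (2:ℝ≥0∞)^((k+1)*n) := by
      have hb : ENNReal.ofReal ((k:ℝ)+1) ≤ (2:ℝ≥0∞)^(k+1) := by
        have hnat : (k:ℝ) + 1 ≤ (2:ℝ)^(k+1) := by
          have h3 : k + 1 ≤ 2^(k+1) := by
            have := Nat.lt_two_pow_self (n := k)
            have h4 : (2:ℕ)^k ≤ 2^(k+1) := Nat.pow_le_pow_right (by norm_num) (by omega)
            omega
          exact_mod_cast h3
        calc ENNReal.ofReal ((k:ℝ)+1) ≤ ENNReal.ofReal ((2:ℝ)^(k+1)) :=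
              ENNReal.ofReal_le_ofReal hnat
          _ = (2:ℝ≥0∞)^(k+1) := by
              rw [ENNReal.ofReal_pow (by norm_num : (0:ℝ) ≤ 2)]; norm_num
      calc ENNReal.ofReal ((k:ℝ)+1) ^ (p/2) ≤ ((2:ℝ≥0∞)^(k+1)) ^ (p/2) :=
            ENNReal.rpow_le_rpow hb (by positivity)
        _ ≤ ((2:ℝ≥0∞)^(k+1)) ^ ((n:ℝ)) := by
            apply ENNReal.rpow_le_rpow_of_exponent_le
            · exact one_le_pow_of_one_le' (by norm_num : (1:ℝ≥0∞) ≤ 2) _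
            · linarith
        _ = (2:ℝ≥0∞)^((k+1)*n) := by rw [ENNReal.rpow_natCast, ← pow_mul]
    calc ENNReal.ofReal (4*u^2*((k:ℝ)+1)) ^ (p/2) * wMeasure w (A k)
        ≤ (ENNReal.ofReal (4*u^2) ^ (p/2) * (2:ℝ≥0∞)^((k+1)*n)) *
            ((((2:ℝ≥0∞)^(n+1))⁻¹)^k * W) := by
          rw [h1]
          exact mul_le_mul (mul_le_mul_right h2 _) (hiter k) zero_le zero_le
      _ = ENNReal.ofReal (4*u^2) ^ (p/2) * W *
            ((2:ℝ≥0∞)^((k+1)*n) * (((2:ℝ≥0∞)^(n+1))⁻¹)^k) := by ring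
      _ = ENNReal.ofReal (4*u^2) ^ (p/2) * W * (2^n * (2⁻¹)^k) := by rw [hqk k]
  have hint : (∫⁻ x, ENNReal.ofReal (SQfn φ f T.bitiles x) ^ p ∂(wMeasure w))
      ≤ ENNReal.ofReal (4*u^2) ^ (p/2) * W * 2^(n+1) := by
    calc (∫⁻ x, ENNReal.ofReal (SQfn φ f T.bitiles x) ^ p ∂(wMeasure w))
        ≤ ∫⁻ x, (∑' k : ℕ, (A k).indicator
            (fun _ => ENNReal.ofReal (4*u^2*((k:ℝ)+1)) ^ (p/2)) x) ∂(wMeasure w) :=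
          lintegral_mono hpt
      _ = ∑' k : ℕ, ∫⁻ x, (A k).indicator
            (fun _ => ENNReal.ofReal (4*u^2*((k:ℝ)+1)) ^ (p/2)) x ∂(wMeasure w) :=
          lintegral_tsum (fun k => (measurable_const.indicator (hAm k)).aemeasurable)
      _ = ∑' k : ℕ, ENNReal.ofReal (4*u^2*((k:ℝ)+1)) ^ (p/2) * wMeasure w (A k) := by
          apply tsum_congr
          intro k
          rw [lintegral_indicator_const (hAm k)]
      _ ≤ ∑' k : ℕ, ENNReal.ofReal (4*u^2) ^ (p/2) * W * (2^n * (2⁻¹)^k) :=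
          ENNReal.tsum_le_tsum hterm
      _ = (ENNReal.ofReal (4*u^2) ^ (p/2) * W * 2^n) * ∑' k : ℕ, (2⁻¹:ℝ≥0∞)^k := by
          rw [← ENNReal.tsum_mul_left]
          apply tsum_congr
          intro k
          ring
      _ = ENNReal.ofReal (4*u^2) ^ (p/2) * W * 2^(n+1) := by
          rw [ENNReal.tsum_geometric, ENNReal.one_sub_inv_two, inv_inv, pow_succ]
          ring
  -- final algebra
  have hof4 : (ENNReal.ofReal (4*u^2) ^ (p/2)) ^ ((1:ℝ)/p) = ENNReal.ofReal (2*u) := by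
    rw [← ENNReal.rpow_mul, show (p/2)*(1/p) = 1/2 by field_simp]
    rw [show 4*u^2 = (2*u)^2 by ring, ENNReal.ofReal_pow (by positivity)]
    rw [← ENNReal.rpow_natCast (ENNReal.ofReal (2*u)) 2, ← ENNReal.rpow_mul,
      show ((2:ℕ):ℝ)*(1/2) = 1 by norm_num, ENNReal.rpow_one]
  calc W ^ (-(1/p) : ℝ) *
      (∫⁻ x, ENNReal.ofReal (SQfn φ f T.bitiles x) ^ p ∂(wMeasure w)) ^ (1/p)
      ≤ W ^ (-(1/p) : ℝ) * (ENNReal.ofReal (4*u^2) ^ (p/2) * W * 2^(n+1)) ^ ((1:ℝ)/p) :=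
        mul_le_mul_right (ENNReal.rpow_le_rpow hint (by positivity)) _
    _ = W ^ (-(1/p) : ℝ) * ((ENNReal.ofReal (4*u^2) ^ (p/2)) ^ ((1:ℝ)/p)
          * W ^ ((1:ℝ)/p) * ((2:ℝ≥0∞)^(n+1)) ^ ((1:ℝ)/p)) := by
        rw [ENNReal.mul_rpow_of_nonneg _ _ (by positivity : (0:ℝ) ≤ 1/p),
          ENNReal.mul_rpow_of_nonneg _ _ (by positivity : (0:ℝ) ≤ 1/p)]
    _ = (W ^ (-(1/p) : ℝ) * W ^ ((1:ℝ)/p)) * (ENNReal.ofReal (2*u)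
          * ((2:ℝ≥0∞)^(n+1)) ^ ((1:ℝ)/p)) := by
        rw [hof4]; ring
    _ = ENNReal.ofReal (2*u) * ((2:ℝ≥0∞)^(n+1)) ^ ((1:ℝ)/p) := by
        rw [← ENNReal.rpow_add _ _ hWne0 hWnetop, show -(1/p) + 1/p = 0 by ring,
          ENNReal.rpow_zero, one_mul]
    _ ≤ ENNReal.ofReal (2*u) * (2:ℝ≥0∞)^(n+1) := by
        apply mul_le_mul_right
        calc ((2:ℝ≥0∞)^(n+1)) ^ ((1:ℝ)/p)
            ≤ ((2:ℝ≥0∞)^(n+1)) ^ ((1:ℝ)) := by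
              apply ENNReal.rpow_le_rpow_of_exponent_le
              · exact one_le_pow_of_one_le' (by norm_num : (1:ℝ≥0∞) ≤ 2) _
              · rw [div_le_one hp0]; linarith
          _ = (2:ℝ≥0∞)^(n+1) := ENNReal.rpow_one _
    _ = (2:ℝ≥0∞)^(2*n+4) * ENNReal.ofReal s := by
        rw [hu_def, show (2:ℝ)*(2^(n+2)*s) = 2^(n+3)*s by ring,
          ENNReal.ofReal_mul (by positivity),
          ENNReal.ofReal_pow (by norm_num : (0:ℝ) ≤ 2)]
        norm_num
        rw [show 2*n+4 = (n+3)+(n+1) by ring, pow_add]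
        ring

/-! #### The easy direction: weak size is dominated by the `L^p` size -/

lemma easy_tree {w : ℝ → ℝ} (hw : IsWeight w)
    {φ : Bitile C1 C2 C21 C22 → ℝ → ℂ} {f : ℝ → ℂ}
    (T : PTree C1 C2 C21 C22) {p : ℝ} (hp : 1 < p) :
    (wSet w T.top.toSet)⁻¹ *
      (⨆ t : ℝ≥0, (t : ℝ≥0∞) * wMeasure w {x | (t:ℝ) < SQfn φ f T.bitiles x})
      ≤ (wSet w T.top.toSet) ^ (-(1/p) : ℝ) *
        (∫⁻ x, ENNReal.ofReal (SQfn φ f T.bitiles x) ^ p ∂(wMeasure w)) ^ (1/p) := by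
  set W := wSet w T.top.toSet with hW
  have hWne0 : W ≠ 0 := wtop_ne_zero hw T.dytop
  have hWnetop : W ≠ ⊤ := wtop_ne_top hw _
  set I2 := ∫⁻ x, ENNReal.ofReal (SQfn φ f T.bitiles x) ^ p ∂(wMeasure w) with hI2
  have hp0 : (0:ℝ) < p := by linarith
  have hmeas : AEMeasurable (fun x => ENNReal.ofReal (SQfn φ f T.bitiles x) ^ p)
      (wMeasure w) := by
    have h1 : Measurable (SQfn φ f T.bitiles) :=
      (Real.continuous_rpow_const (by norm_num : (0:ℝ) ≤ 1/2)).measurable.comp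
        (measurable_gg φ f T.bitiles)
    exact (ENNReal.continuous_rpow_const.measurable.comp h1.ennreal_ofReal).aemeasurable
  have hsup : (⨆ t : ℝ≥0, (t:ℝ≥0∞) * wMeasure w {x | (t:ℝ) < SQfn φ f T.bitiles x})
      ≤ I2 ^ ((1:ℝ)/p) * W ^ (1 - 1/p : ℝ) := by
    apply iSup_le
    intro t
    set Y := wMeasure w {x | (t:ℝ) < SQfn φ f T.bitiles x} with hY
    have hYW : Y ≤ W := by
      apply measure_mono
      intro x hx
      simp only [Set.mem_setOf_eq] at hx
      have hgnn := gg_nonneg φ f T.bitiles x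
      have hgpos : 0 < gg φ f T.bitiles x := by
        rcases hgnn.lt_or_eq with h | h
        · exact h
        · exfalso
          have hz : SQfn φ f T.bitiles x = 0 := by
            rw [SQfn_eq, ← h, Real.zero_rpow (by norm_num : (1:ℝ)/2 ≠ 0)]
          rw [hz] at hx
          exact absurd hx (not_lt.mpr t.coe_nonneg)
      exact gg_support φ f (fun P hP => (T.compat P hP).1) hgpos
    have hcheb : ((t:ℝ≥0∞)) ^ (p:ℝ) * Y ≤ I2 := by
      have hsubset : {x | (t:ℝ) < SQfn φ f T.bitiles x} ⊆
          {x | (t:ℝ≥0∞)^(p:ℝ) ≤ ENNReal.ofReal (SQfn φ f T.bitiles x) ^ p} := by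
        intro x hx
        simp only [Set.mem_setOf_eq] at hx ⊢
        apply ENNReal.rpow_le_rpow _ hp0.le
        calc ((t:ℝ≥0∞)) = ENNReal.ofReal (t:ℝ) := ENNReal.ofReal_coe_nnreal.symm
          _ ≤ ENNReal.ofReal (SQfn φ f T.bitiles x) := ENNReal.ofReal_le_ofReal hx.le
      calc (t:ℝ≥0∞)^(p:ℝ) * Y ≤ (t:ℝ≥0∞)^(p:ℝ) *
          wMeasure w {x | (t:ℝ≥0∞)^(p:ℝ) ≤ ENNReal.ofReal (SQfn φ f T.bitiles x) ^ p} :=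
          mul_le_mul_right (measure_mono hsubset) _
        _ ≤ I2 := mul_meas_ge_le_lintegral₀ hmeas _
    rcases eq_or_ne Y 0 with hY0 | hY0
    · rw [hY0, mul_zero]; exact zero_le
    have hYnetop : Y ≠ ⊤ := ne_top_of_le_ne_top hWnetop hYW
    have hid : (t:ℝ≥0∞) * Y = ((t:ℝ≥0∞)^(p:ℝ) * Y) ^ ((1:ℝ)/p) * Y ^ (1 - 1/p : ℝ) := by
      rw [ENNReal.mul_rpow_of_nonneg _ _ (by positivity : (0:ℝ) ≤ 1/p),
        ← ENNReal.rpow_mul, show p * (1/p) = 1 by field_simp, ENNReal.rpow_one,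
        mul_assoc, ← ENNReal.rpow_add _ _ hY0 hYnetop,
        show 1/p + (1 - 1/p) = 1 by ring, ENNReal.rpow_one]
    rw [hid]
    have hexp : (0:ℝ) ≤ 1 - 1/p := by
      have h5 : 1/p < 1 := (div_lt_one hp0).mpr hp
      linarith
    exact mul_le_mul (ENNReal.rpow_le_rpow hcheb (by positivity))
      (ENNReal.rpow_le_rpow hYW hexp) zero_le zero_le
  calc W⁻¹ * (⨆ t : ℝ≥0, (t:ℝ≥0∞) * wMeasure w {x | (t:ℝ) < SQfn φ f T.bitiles x})
      ≤ W⁻¹ * (I2 ^ ((1:ℝ)/p) * W ^ (1 - 1/p : ℝ)) := mul_le_mul_right hsup _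
    _ = (W ^ (-1:ℝ) * W ^ (1 - 1/p : ℝ)) * I2 ^ ((1:ℝ)/p) := by
        rw [ENNReal.rpow_neg_one]; ring
    _ = W ^ (-(1/p) : ℝ) * I2 ^ ((1:ℝ)/p) := by
        rw [← ENNReal.rpow_add _ _ hWne0 hWnetop,
          show (-1:ℝ) + (1 - 1/p) = -(1/p) by ring]

end SJN







/-- **Lemma 3.2 (John–Nirenberg characterization of size).** The `L^p`-normalized and the
weak-`L^1`-normalized sizes over `2`-overlapping trees are comparable. -/
theorem size_john_nirenberg
    (C1 C2 C21 C22 C3 : ℝ) (hadm : Admissible C1 C2 C21 C22 C3) (Cp : ℕ → ℕ → ℝ)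
    (q : ℝ) (hq : 1 < q) (w : ℝ → ℝ) (hw : IsAp q w) (p : ℝ) (hp : 1 < p) :
    ∃ K0min : ℝ, ∀ K0 : ℝ, K0min ≤ K0 →
    ∃ C : ℝ, 0 < C ∧
      ∀ Ps : Finset (Bitile C1 C2 C21 C22), SepConds K0 Ps →
      ∀ φ : Bitile C1 C2 C21 C22 → ℝ → ℂ,
        (∀ P ∈ Ps, IsWavePacket C3 Cp P.t1 (φ P)) →
      ∀ f : ℝ → ℂ, Measurable f →
        sizeLp w φ f p Ps ≤ ENNReal.ofReal C * sizeWk w φ f Ps ∧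
        sizeWk w φ f Ps ≤ ENNReal.ofReal C * sizeLp w φ f p Ps := by
  classical
  obtain ⟨hwIsW, -⟩ := hw
  obtain ⟨hC2one, -, -, -, -, -⟩ := hadm
  refine ⟨0, fun K0 _ => ?_⟩
  set n : ℕ := ⌈p⌉₊ with hn
  have hpn : p ≤ (n:ℝ) := Nat.le_ceil p
  refine ⟨(2:ℝ)^(2*n+4), by positivity, ?_⟩
  intro Ps _ φ _ f _
  have hCpos : (0:ℝ) < (2:ℝ)^(2*n+4) := by positivity
  constructor
  · -- the hard direction
    set σ := sizeWk w φ f Ps with hσdef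
    have main : ∀ s : ℝ, 0 < s → σ ≤ ENNReal.ofReal s →
        sizeLp w φ f p Ps ≤ ENNReal.ofReal ((2:ℝ)^(2*n+4)) * ENNReal.ofReal s := by
      intro s hs hσ
      have hconv : ENNReal.ofReal ((2:ℝ)^(2*n+4)) = (2:ℝ≥0∞)^(2*n+4) := by
        rw [ENNReal.ofReal_pow (by norm_num : (0:ℝ) ≤ 2)]; norm_num
      rw [hconv]
      apply iSup_le; intro T; apply iSup_le; intro hT; apply iSup_le; intro hTov
      exact SJN.hard_tree hC2one hwIsW hs hσ T hT hTov hp n hpn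
    rcases eq_or_ne σ ⊤ with htop | htop
    · rw [htop, ENNReal.mul_top (ENNReal.ofReal_pos.mpr hCpos).ne']
      exact le_top
    · apply ENNReal.le_of_forall_pos_le_add
      intro ε hε _
      have hs : (0:ℝ) < σ.toReal + (ε:ℝ)/(2:ℝ)^(2*n+4) := by positivity
      have hσle : σ ≤ ENNReal.ofReal (σ.toReal + (ε:ℝ)/(2:ℝ)^(2*n+4)) := by
        rw [ENNReal.ofReal_add ENNReal.toReal_nonneg (by positivity)]
        calc σ = ENNReal.ofReal σ.toReal := (ENNReal.ofReal_toReal htop).symm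
          _ ≤ _ := le_self_add
      calc sizeLp w φ f p Ps
          ≤ ENNReal.ofReal ((2:ℝ)^(2*n+4)) *
            ENNReal.ofReal (σ.toReal + (ε:ℝ)/(2:ℝ)^(2*n+4)) := main _ hs hσle
        _ = ENNReal.ofReal ((2:ℝ)^(2*n+4)) * ENNReal.ofReal σ.toReal
            + ENNReal.ofReal ((2:ℝ)^(2*n+4)) * ENNReal.ofReal ((ε:ℝ)/(2:ℝ)^(2*n+4)) := by
            rw [ENNReal.ofReal_add ENNReal.toReal_nonneg (by positivity), mul_add]
        _ = ENNReal.ofReal ((2:ℝ)^(2*n+4)) * σ + ↑ε := by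
            rw [ENNReal.ofReal_toReal htop]
            congr 1
            rw [← ENNReal.ofReal_mul hCpos.le,
              show (2:ℝ)^(2*n+4) * ((ε:ℝ)/(2:ℝ)^(2*n+4)) = (ε:ℝ) by field_simp,
              ENNReal.ofReal_coe_nnreal]
  · -- the easy direction
    have h1 : sizeWk w φ f Ps ≤ sizeLp w φ f p Ps := by
      apply iSup_le; intro T; apply iSup_le; intro hT; apply iSup_le; intro hTov
      refine le_iSup_of_le T (le_iSup_of_le hT (le_iSup_of_le hTov ?_))
      exact SJN.easy_tree hwIsW T hp
    calc sizeWk w φ f Ps ≤ sizeLp w φ f p Ps := h1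
      _ = 1 * sizeLp w φ f p Ps := (one_mul _).symm
      _ ≤ ENNReal.ofReal ((2:ℝ)^(2*n+4)) * sizeLp w φ f p Ps := by
          apply mul_le_mul_left
          rw [show (1:ℝ≥0∞) = ENNReal.ofReal 1 by simp]
          apply ENNReal.ofReal_le_ofReal
          exact one_le_pow₀ (by norm_num)
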